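/- Let $q = p^k$ with $k \geq 1$, and let $n \leq q$ be a positive integer. Then for every matrix $A$ in the group $\mathbb{U}_{n+1}$ of upper unitriangular $(n+1)\times(n+1)$ matrices over $\mathbb{F}_p$, the power $A^q$ lies in the center of $\mathbb{U}_{n+1}$. -/
import Mathlib


/-- If `q = p^k` with `k ≥ 1` and `n ≤ q`, then for every upper unitriangular
`(n+1) × (n+1)` matrix `A` over `𝔽_p`, the power `A^q` lies in the center of the
group of upper unitriangular matrices. -/
theorem unitriangular_pow_q_central {p n k : ℕ} (hp : p.Prime) (hk : 1 ≤ k)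
    (hn : 1 ≤ n) (hnq : n ≤ p ^ k)
    (A : Matrix (Fin (n + 1)) (Fin (n + 1)) (ZMod p))
    (hA1 : ∀ i, A i i = 1) (hA0 : ∀ i j : Fin (n + 1), (j : ℕ) < (i : ℕ) → A i j = 0) :
    ∀ B : Matrix (Fin (n + 1)) (Fin (n + 1)) (ZMod p),
      ((∀ i, B i i = 1) ∧ ∀ i j : Fin (n + 1), (j : ℕ) < (i : ℕ) → B i j = 0) →
      A ^ (p ^ k) * B = B * A ^ (p ^ k) := by
  rintro B ⟨hB1, hB0⟩
  set q := p ^ k with hq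
  have hq1 : 1 ≤ q := Nat.one_le_pow _ _ hp.pos
  set N : Matrix (Fin (n + 1)) (Fin (n + 1)) (ZMod p) := A - 1 with hN
  have hNstrict : ∀ i j : Fin (n + 1), (j : ℕ) ≤ (i : ℕ) → N i j = 0 := by
    intro i j hij
    rcases eq_or_lt_of_le hij with h | h
    · have hij' : i = j := Fin.ext h.symm
      simp [hN, Matrix.sub_apply, Matrix.one_apply, hij', hA1]
    · have hne : i ≠ j := fun e => by
        have := congrArg Fin.val e; omega
      simp [hN, Matrix.sub_apply, Matrix.one_apply, hA0 i j h, hne]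
  have hpow : ∀ m, ∀ i j : Fin (n + 1), (j : ℕ) < (i : ℕ) + m → (N ^ m) i j = 0 := by
    intro m
    induction m with
    | zero =>
      intro i j h
      rw [pow_zero, Matrix.one_apply_ne]
      intro e; have := congrArg Fin.val e; omega
    | succ m ih =>
      intro i j h
      rw [pow_succ', Matrix.mul_apply]
      apply Finset.sum_eq_zero
      intro x _
      by_cases hx : (x : ℕ) ≤ (i : ℕ)
      · rw [hNstrict i x hx, zero_mul]
      · rw [ih x j (by omega), mul_zero]
  have hexp : A ^ q = 1 + N ^ q := by
    have hA : A = N + 1 := by simp [hN]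
    rw [hA, (Commute.one_right N).add_pow, Finset.sum_range_succ]
    have hsum : ∑ m ∈ Finset.range q, N ^ m * 1 ^ (q - m) * (q.choose m : Matrix (Fin (n+1)) (Fin (n+1)) (ZMod p)) = 1 := by
      rw [Finset.sum_eq_single 0]
      · simp
      · intro m hm hm0
        have hdvd : p ∣ q.choose m := hp.dvd_choose_pow hm0 (by
          intro e; rw [e] at hm; exact absurd (Finset.mem_range.mp hm) (lt_irrefl _))
        have : (q.choose m : Matrix (Fin (n+1)) (Fin (n+1)) (ZMod p)) = 0 := by
          exact_mod_cast (CharP.cast_eq_zero_iff (Matrix (Fin (n+1)) (Fin (n+1)) (ZMod p)) p _).mpr hdvd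
        rw [this, mul_zero]
      · intro h; exact absurd (Finset.mem_range.mpr hq1) h
    rw [hsum]
    simp [add_comm]
  have hNq : ∀ i j : Fin (n + 1), ((i : ℕ) ≠ 0 ∨ (j : ℕ) ≠ n) → (N ^ q) i j = 0 := by
    intro i j hij
    apply hpow q
    have hjn : (j : ℕ) < n + 1 := j.isLt
    rcases hij with h | h
    · omega
    · omega
  have hleft : N ^ q * B = N ^ q := by
    ext i j
    rw [Matrix.mul_apply]
    by_cases hi : (i : ℕ) = 0
    · rw [Finset.sum_eq_single (Fin.last n)]
      · by_cases hj : (j : ℕ) = n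
        · have hjl : j = Fin.last n := Fin.ext (by simp [hj])
          rw [hjl, hB1, mul_one]
        · rw [hNq i j (Or.inr hj), hB0 (Fin.last n) j (by simp; omega), mul_zero]
      · intro x _ hx
        have : (x : ℕ) ≠ n := fun h => hx (Fin.ext (by simp [h]))
        rw [hNq i x (Or.inr this), zero_mul]
      · intro h; exact absurd (Finset.mem_univ _) h
    · rw [hNq i j (Or.inl hi)]
      apply Finset.sum_eq_zero
      intro x _
      rw [hNq i x (Or.inl hi), zero_mul]
  have hright : B * N ^ q = N ^ q := by
    ext i j
    rw [Matrix.mul_apply]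
    rw [Finset.sum_eq_single (0 : Fin (n + 1))]
    · by_cases hi : (i : ℕ) = 0
      · have hi0 : i = 0 := Fin.ext (by simpa using hi)
        rw [hi0, hB1, one_mul]
      · rw [hNq i j (Or.inl hi), hB0 i 0 (by simpa using Nat.pos_of_ne_zero hi), zero_mul]
    · intro x _ hx
      have : (x : ℕ) ≠ 0 := fun h => hx (Fin.ext (by simpa using h))
      rw [hNq x j (Or.inl this), mul_zero]
    · intro h; exact absurd (Finset.mem_univ _) h
  rw [hexp, add_mul, mul_add, one_mul, mul_one, hleft, hright]
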